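/- Let k > 1 and define f_k(z) = ((1+k)/2 − z)^((1+k)/(2k)) · (z + (k−1)/2)^((k−1)/(2k)) for z ∈ [0,1]. Then f_k is positive on [0,1] and the function t ↦ (1−t)/f_k(t) is nonincreasing on [0,1]. -/

import Mathlib

/-- For `k > 1`, the allocation function
`f_k z = ((1+k)/2 - z)^((1+k)/(2k)) · (z + (k-1)/2)^((k-1)/(2k))`
is positive on `[0,1]`, and `t ↦ (1-t)/f_k t` is nonincreasing on `[0,1]`. -/
theorem fk_admissible (k : ℝ) (hk : 1 < k) (f : ℝ → ℝ)
    (hf : ∀ z, f z = ((1 + k) / 2 - z) ^ ((1 + k) / (2 * k)) *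
                     (z + (k - 1) / 2) ^ ((k - 1) / (2 * k))) :
    (∀ z ∈ Set.Icc (0:ℝ) 1, 0 < f z) ∧
    (∀ s ∈ Set.Icc (0:ℝ) 1, ∀ t ∈ Set.Icc (0:ℝ) 1,
      s ≤ t → (1 - t) / f t ≤ (1 - s) / f s) := by
  have hk0 : (0:ℝ) < k := lt_trans one_pos hk
  set p : ℝ := (1 + k) / (2 * k) with hp
  set q : ℝ := (k - 1) / (2 * k) with hq
  have hA : ∀ t ∈ Set.Icc (0:ℝ) 1, 0 < (1 + k) / 2 - t := by
    intro t ht; nlinarith [ht.2]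
  have hB : ∀ t ∈ Set.Icc (0:ℝ) 1, 0 < t + (k - 1) / 2 := by
    intro t ht; nlinarith [ht.1]
  have hfpos : ∀ t ∈ Set.Icc (0:ℝ) 1, 0 < f t := by
    intro t ht
    rw [hf]
    exact mul_pos (Real.rpow_pos_of_pos (hA t ht) _)
      (Real.rpow_pos_of_pos (hB t ht) _)
  refine ⟨hfpos, ?_⟩
  -- derivative of f
  have hderiv : ∀ t ∈ Set.Icc (0:ℝ) 1,
      HasDerivAt f (((1 + k) / 2 - t) ^ (p - 1) * (t + (k - 1) / 2) ^ (q - 1) * (-t)) t := by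
    intro t ht
    have hAt := hA t ht
    have hBt := hB t ht
    have h1 : HasDerivAt (fun z : ℝ => (1 + k) / 2 - z) (-1) t := by
      simpa using (hasDerivAt_id t).const_sub ((1 + k) / 2)
    have h2 : HasDerivAt (fun z : ℝ => z + (k - 1) / 2) 1 t := by
      simpa using (hasDerivAt_id t).add_const ((k - 1) / 2)
    have h1' := h1.rpow_const (p := p) (Or.inl hAt.ne')
    have h2' := h2.rpow_const (p := q) (Or.inl hBt.ne')
    have hmul := h1'.mul h2'
    have hfe : f = fun z => ((1 + k) / 2 - z) ^ p * (z + (k - 1) / 2) ^ q := funext hf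
    rw [hfe]
    convert hmul using 1
    · rfl
    · rfl
    · rfl
    have eA : ((1 + k) / 2 - t) ^ p = ((1 + k) / 2 - t) ^ (p - 1) * ((1 + k) / 2 - t) := by
      rw [← Real.rpow_add_one hAt.ne', sub_add_cancel]
    have eB : (t + (k - 1) / 2) ^ q = (t + (k - 1) / 2) ^ (q - 1) * (t + (k - 1) / 2) := by
      rw [← Real.rpow_add_one hBt.ne', sub_add_cancel]
    have key : -p * (t + (k - 1) / 2) + q * ((1 + k) / 2 - t) = -t := by
      rw [hp, hq]; field_simp; ring
    rw [eA, eB]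
    have hkk : k * k⁻¹ = 1 := mul_inv_cancel₀ hk0.ne'
    linear_combination (((1 + k) / 2 - t) ^ (p - 1) * (t + (k - 1) / 2) ^ (q - 1)) * key +
      2 * (((1 + k) / 2 - t) ^ (p - 1) * (t + (k - 1) / 2) ^ (q - 1)) * t * hkk
  -- derivative of g
  set g : ℝ → ℝ := fun t => (1 - t) / f t with hg
  have hgd : ∀ t ∈ Set.Icc (0:ℝ) 1,
      HasDerivAt g (((-1) * f t - (1 - t) *
        (((1 + k) / 2 - t) ^ (p - 1) * (t + (k - 1) / 2) ^ (q - 1) * (-t))) / (f t) ^ 2) t := by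
    intro t ht
    have hnum : HasDerivAt (fun z : ℝ => 1 - z) (-1) t := by
      simpa using (hasDerivAt_id t).const_sub (1 : ℝ)
    exact hnum.div (hderiv t ht) (hfpos t ht).ne'
  have hgd_le : ∀ t ∈ Set.Icc (0:ℝ) 1,
      ((-1) * f t - (1 - t) *
        (((1 + k) / 2 - t) ^ (p - 1) * (t + (k - 1) / 2) ^ (q - 1) * (-t))) / (f t) ^ 2 ≤ 0 := by
    intro t ht
    have hAt := hA t ht
    have hBt := hB t ht
    have eA : ((1 + k) / 2 - t) ^ p = ((1 + k) / 2 - t) ^ (p - 1) * ((1 + k) / 2 - t) := by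
      rw [← Real.rpow_add_one hAt.ne', sub_add_cancel]
    have eB : (t + (k - 1) / 2) ^ q = (t + (k - 1) / 2) ^ (q - 1) * (t + (k - 1) / 2) := by
      rw [← Real.rpow_add_one hBt.ne', sub_add_cancel]
    have hXY : 0 < ((1 + k) / 2 - t) ^ (p - 1) * (t + (k - 1) / 2) ^ (q - 1) :=
      mul_pos (Real.rpow_pos_of_pos hAt _) (Real.rpow_pos_of_pos hBt _)
    apply div_nonpos_of_nonpos_of_nonneg _ (sq_nonneg _)
    have hnum : (-1) * f t - (1 - t) *
        (((1 + k) / 2 - t) ^ (p - 1) * (t + (k - 1) / 2) ^ (q - 1) * (-t))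
        = -(((1 + k) / 2 - t) ^ (p - 1) * (t + (k - 1) / 2) ^ (q - 1)) * ((k ^ 2 - 1) / 4) := by
      rw [hf, eA, eB]; ring
    rw [hnum]
    have hc : (0:ℝ) ≤ (k ^ 2 - 1) / 4 := by nlinarith
    exact mul_nonpos_of_nonpos_of_nonneg (neg_nonpos.mpr hXY.le) hc
  have hanti : AntitoneOn g (Set.Icc (0:ℝ) 1) := by
    apply antitoneOn_of_deriv_nonpos (convex_Icc 0 1)
    · exact fun t ht => ((hgd t ht).differentiableAt).continuousAt.continuousWithinAt
    · intro t ht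
      rw [interior_Icc] at ht
      exact ((hgd t (Set.Ioo_subset_Icc_self ht)).differentiableAt).differentiableWithinAt
    · intro t ht
      rw [interior_Icc] at ht
      rw [(hgd t (Set.Ioo_subset_Icc_self ht)).deriv]
      exact hgd_le t (Set.Ioo_subset_Icc_self ht)
  intro s hs t ht hst
  exact hanti hs ht hst
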